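/- For real numbers $a, b$ with $0 < a \le b \le 2a$, the integral $\int_0^{\infty} \frac{(\kappa_q(a) - \kappa_q(b))^2}{q}\, dq \le (a-b)^2 \ln 4$, where for $q > 0$, $\kappa_q(y) := \min(q, \max(q/2, y))$. -/
import Mathlib


open MeasureTheory

/-- The clamping function `κ_q(y) = min(q, max(q/2, y))`. -/
noncomputable def kappa (q y : ℝ) : ℝ := min q (max (q / 2) y)

theorem kappa_integral_case_middle (a b : ℝ) (ha : 0 < a) (hab : a ≤ b) (hb : b ≤ 2 * a) :
    (∫ q in Set.Ioi (0 : ℝ), (kappa q a - kappa q b) ^ 2 / q) ≤ (a - b) ^ 2 * Real.log 4 := by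
  have hb0 : 0 < b := lt_of_lt_of_le ha hab
  have ha2b : a ≤ 2 * b := by linarith
  set f : ℝ → ℝ := fun q => (kappa q a - kappa q b) ^ 2 / q with hf
  -- f vanishes outside Ioc a (2b)
  have hker : ∀ q ∈ Set.Ioi (0:ℝ), q ∉ Set.Ioc a (2*b) → f q = 0 := by
    intro q hq hq'
    have hq0 : (0:ℝ) < q := hq
    simp only [Set.mem_Ioc, not_and_or, not_lt, not_le] at hq'
    have hk : kappa q a = kappa q b := by
      rcases hq' with h | h
      · have h1 : q / 2 ≤ a := by linarith
        have h2 : q / 2 ≤ b := by linarith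
        unfold kappa
        rw [max_eq_right h1, max_eq_right h2, min_eq_left h, min_eq_left (h.trans hab)]
      · have h1 : a ≤ q / 2 := by linarith
        have h2 : b ≤ q / 2 := by linarith
        unfold kappa
        rw [max_eq_left h1, max_eq_left h2]
    simp [f, hk]
  have hmeas : MeasurableSet (Set.Ioc a (2*b)) := measurableSet_Ioc
  have hcont_k : ∀ y : ℝ, Continuous fun q : ℝ => kappa q y := by
    intro y
    unfold kappa
    exact continuous_id.min ((continuous_id.div_const 2).max continuous_const)
  have hfc : ContinuousOn f (Set.Icc a (2*b)) := by
    apply ContinuousOn.div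
    · exact (((hcont_k a).sub (hcont_k b)).pow 2).continuousOn
    · exact continuousOn_id
    · intro x hx; exact ne_of_gt (lt_of_lt_of_le ha hx.1)
  have hf_int : IntegrableOn f (Set.Ioc a (2*b)) :=
    (hfc.integrableOn_Icc).mono_set Set.Ioc_subset_Icc_self
  have hgc : ContinuousOn (fun q : ℝ => (a-b)^2 / q) (Set.Icc a (2*b)) := by
    apply ContinuousOn.div continuousOn_const continuousOn_id
    intro x hx; exact ne_of_gt (lt_of_lt_of_le ha hx.1)
  have hg_int : IntegrableOn (fun q => (a-b)^2 / q) (Set.Ioc a (2*b)) :=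
    (hgc.integrableOn_Icc).mono_set Set.Ioc_subset_Icc_self
  have hbound : ∀ q ∈ Set.Ioc a (2*b), f q ≤ (a-b)^2 / q := by
    intro q hq
    have hq0 : 0 < q := lt_of_lt_of_le ha hq.1.le
    have hsq : (kappa q a - kappa q b) ^ 2 ≤ (a - b) ^ 2 := by
      simp only [kappa, min_def, max_def]
      split_ifs <;> nlinarith
    exact div_le_div_of_nonneg_right hsq hq0.le
  have hinter : Set.Ioi (0:ℝ) ∩ Set.Ioc a (2*b) = Set.Ioc a (2*b) :=
    Set.inter_eq_self_of_subset_right fun x hx => lt_of_lt_of_le ha hx.1.le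
  have heq : (∫ q in Set.Ioi (0:ℝ), f q) = ∫ q in Set.Ioc a (2*b), f q := by
    calc (∫ q in Set.Ioi (0:ℝ), f q)
        = ∫ q in Set.Ioi (0:ℝ), (Set.Ioc a (2*b)).indicator f q := by
          apply setIntegral_congr_fun measurableSet_Ioi
          intro q hq
          by_cases h : q ∈ Set.Ioc a (2*b)
          · simp [Set.indicator_of_mem h]
          · simp [Set.indicator_of_notMem h, hker q hq h]
      _ = ∫ q in Set.Ioi (0:ℝ) ∩ Set.Ioc a (2*b), f q := setIntegral_indicator hmeas
      _ = ∫ q in Set.Ioc a (2*b), f q := by rw [hinter]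
  have hmono : (∫ q in Set.Ioc a (2*b), f q) ≤ ∫ q in Set.Ioc a (2*b), (a-b)^2 / q :=
    setIntegral_mono_on hf_int hg_int hmeas hbound
  have hcomp : (∫ q in Set.Ioc a (2*b), (a-b)^2 / q) = (a-b)^2 * Real.log ((2*b)/a) := by
    rw [← intervalIntegral.integral_of_le ha2b]
    have h0 : (0:ℝ) ∉ Set.uIcc a (2*b) := by
      rw [Set.uIcc_of_le ha2b]
      intro h
      exact absurd h.1 (not_le.mpr ha)
    calc (∫ q in a..(2*b), (a-b)^2 / q)
        = ∫ q in a..(2*b), (a-b)^2 * (1/q) := by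
          apply intervalIntegral.integral_congr
          intro q _; ring
      _ = (a-b)^2 * ∫ q in a..(2*b), 1/q := intervalIntegral.integral_const_mul _ _
      _ = (a-b)^2 * Real.log ((2*b)/a) := by rw [integral_one_div h0]
  have hlog : Real.log ((2*b)/a) ≤ Real.log 4 := by
    apply Real.log_le_log (by positivity)
    rw [div_le_iff₀ ha]
    linarith
  calc (∫ q in Set.Ioi (0:ℝ), f q)
      ≤ (a-b)^2 * Real.log ((2*b)/a) := by rw [heq]; rw [← hcomp]; exact hmono
    _ ≤ (a-b)^2 * Real.log 4 := mul_le_mul_of_nonneg_left hlog (sq_nonneg _)
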